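/- Let 𝒟 = (V,E) be a DAG with reachability matrix R and let B = (b_{ij})_{d×d} be a nonnegative matrix with sgn(B) = R. Then there exist positive weights c_{ki} > 0 for (k,i) ∈ E and c_{ii} > 0 for i ∈ V such that for every z ∈ [0,∞)^d and every i ∈ V, max_{j∈V} b_{ji} z_j = max( max_{k ∈ pa(i)} c_{ki} · max_{j∈V} b_{jk} z_j , c_{ii} z_i ), if and only if for every i ∈ V: b_{ji} = max_{k ∈ de(j)∩pa(i)} b_{jk} b_{ki} / b_{kk} for all j ∈ an(i)∖pa(i), and b_{ji} ≥ max_{k ∈ de(j)∩pa(i)} b_{jk} b_{ki} / b_{kk} for all j ∈ pa(i) (maximum over the empty set is 0). -/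

import Mathlib

open scoped NNReal ENNReal Classical

namespace MaxLinearDAG

variable {d : ℕ}

/-- `p` is a directed path (with at least one edge) from `j` to `i` in the edge relation `E`. -/
def PathFrom (E : Fin d → Fin d → Prop) (j i : Fin d) (p : List (Fin d)) : Prop :=
  2 ≤ p.length ∧ p.head? = some j ∧ p.getLast? = some i ∧ List.Chain' E p

/-- The directed graph given by `E` is acyclic: no directed path from a node to itself. -/
def Acyclic (E : Fin d → Fin d → Prop) : Prop :=
  ∀ i, ¬ ∃ p, PathFrom E i i p

/-- `j` is an ancestor of `i`: there is a path from `j` to `i`. -/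
def anc (E : Fin d → Fin d → Prop) (j i : Fin d) : Prop :=
  ∃ p, PathFrom E j i p

/-- The weight of a path `p` starting at `j`: `c j j` times the product of the
edge weights along `p`. -/
noncomputable def pathWeight (c : Fin d → Fin d → ℝ≥0) (j : Fin d) (p : List (Fin d)) : ℝ≥0 :=
  c j j * ((p.zip p.tail).map fun q => c q.1 q.2).prod

/-- `b` is the max-linear coefficient matrix of the recursive ML model on `(E, c)`:
for `j ∈ an(i)`, `b j i` is the (attained) maximum of the path weights over all paths
from `j` to `i`; `b i i = c i i`; and `b j i = 0` for `j ∉ An(i)`. -/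
def IsMLMatrix (E : Fin d → Fin d → Prop) (c b : Fin d → Fin d → ℝ≥0) : Prop :=
  (∀ i, b i i = c i i) ∧
  (∀ j i, j ≠ i → ¬ anc E j i → b j i = 0) ∧
  (∀ j i p, PathFrom E j i p → pathWeight c j p ≤ b j i) ∧
  (∀ j i, anc E j i → ∃ p, PathFrom E j i p ∧ pathWeight c j p = b j i)

/-- `x` is the vector of recursive max-linear values on `(E, c)` for noise `z`:
`x i = max (max_{k ∈ pa(i)} c k i * x k) (c i i * z i)`, empty max being `0`. -/
def IsRecML (E : Fin d → Fin d → Prop) (c : Fin d → Fin d → ℝ≥0) (z x : Fin d → ℝ≥0) : Prop :=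
  ∀ i, x i = (Finset.univ.sup fun k => if E k i then c k i * x k else 0) ⊔ c i i * z i

/-- Max-times matrix product `F ⊙ G`. -/
noncomputable def mprod (F G : Fin d → Fin d → ℝ≥0) : Fin d → Fin d → ℝ≥0 :=
  fun i j => Finset.univ.sup fun k => F i k * G k j

/-- Max-times matrix power, `mpow A 0` being the identity matrix. -/
noncomputable def mpow (A : Fin d → Fin d → ℝ≥0) : ℕ → Fin d → Fin d → ℝ≥0
  | 0 => fun i j => if i = j then 1 else 0
  | n + 1 => mprod (mpow A n) A

/-- `p` is a max-weighted path from `j` to `i`. -/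
def MaxWeighted (E : Fin d → Fin d → Prop) (c b : Fin d → Fin d → ℝ≥0)
    (j i : Fin d) (p : List (Fin d)) : Prop :=
  PathFrom E j i p ∧ pathWeight c j p = b j i

/-- The lowest max-weighted ancestors of `i` in `U`: nodes `j ∈ An(i) ∩ U` such that no
max-weighted path from `j` to `i` passes through a node of `U \ {j}`. -/
def AnLow (E : Fin d → Fin d → Prop) (c b : Fin d → Fin d → ℝ≥0)
    (U : Set (Fin d)) (i : Fin d) : Set (Fin d) :=
  {j | (anc E j i ∨ j = i) ∧ j ∈ U ∧
    ∀ p, MaxWeighted E c b j i p → ¬ ∃ u ∈ U \ {j}, u ∈ p}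

/-- The highest max-weighted descendants of `i` in `U`: nodes `l ∈ De(i) ∩ U` such that no
max-weighted path from `i` to `l` passes through a node of `U \ {l}`. -/
def DeHigh (E : Fin d → Fin d → Prop) (c b : Fin d → Fin d → ℝ≥0)
    (U : Set (Fin d)) (i : Fin d) : Set (Fin d) :=
  {l | (anc E i l ∨ l = i) ∧ l ∈ U ∧
    ∀ p, MaxWeighted E c b i l p → ¬ ∃ u ∈ U \ {l}, u ∈ p}

lemma anc_of_edge {E : Fin d → Fin d → Prop} {k i : Fin d} (h : E k i) : anc E k i := by
  refine ⟨[k, i], by simp, rfl, rfl, List.isChain_cons_cons.2 ⟨h, by simp⟩⟩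

lemma pathFrom_append {E : Fin d → Fin d → Prop} {j k i : Fin d} {p q : List (Fin d)}
    (hp : PathFrom E j k p) (hq : PathFrom E k i q) : PathFrom E j i (p ++ q.tail) := by
  obtain ⟨hl, hh, hg, hc⟩ := hp
  obtain ⟨hl', hh', hg', hc'⟩ := hq
  obtain ⟨a, t, rfl⟩ : ∃ a t, q = a :: t := by
    cases q with
    | nil => simp at hl'
    | cons a t => exact ⟨a, t, rfl⟩
  obtain rfl : a = k := by simpa using hh'
  obtain ⟨m, t', rfl⟩ : ∃ m t', t = m :: t' := by
    cases t with
    | nil => simp at hl'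
    | cons m t' => exact ⟨m, t', rfl⟩
  have hp_ne : p ≠ [] := by rintro rfl; simp at hl
  refine ⟨?_, ?_, ?_, ?_⟩
  · simp only [List.length_append]; omega
  · rw [List.head?_append]
    cases p with
    | nil => simp at hl
    | cons a t => simpa using hh
  · rw [List.getLast?_append]
    have : (m :: t').getLast? = some i := by
      rw [← hg']
      simp [List.getLast?_cons_cons]
    simp [this]
  · show List.IsChain E _
    rw [List.isChain_append]
    refine ⟨hc, hc'.tail, ?_⟩
    intro x hx y hy
    rw [hg] at hx
    simp at hx hy
    subst hx; subst hy
    exact (List.isChain_cons_cons.1 hc').1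

lemma anc_trans {E : Fin d → Fin d → Prop} {j k i : Fin d} (h1 : anc E j k) (h2 : anc E k i) :
    anc E j i := by
  obtain ⟨p, hp⟩ := h1; obtain ⟨q, hq⟩ := h2
  exact ⟨_, pathFrom_append hp hq⟩

lemma anc_snoc {E : Fin d → Fin d → Prop} {j k i : Fin d} (h1 : anc E j k) (h2 : E k i) :
    anc E j i := anc_trans h1 (anc_of_edge h2)

lemma not_anc_self {E : Fin d → Fin d → Prop} (hE : Acyclic E) (i : Fin d) : ¬ anc E i i :=
  fun ⟨p, hp⟩ => hE i ⟨p, hp⟩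

lemma edge_ne {E : Fin d → Fin d → Prop} (hE : Acyclic E) {k i : Fin d} (h : E k i) : k ≠ i := by
  rintro rfl; exact not_anc_self hE k (anc_of_edge h)

lemma wf_anc {E : Fin d → Fin d → Prop} (hE : Acyclic E) :
    WellFounded (fun m i : Fin d => anc E m i) := by
  haveI : IsTrans (Fin d) (fun m i => anc E m i) := ⟨fun _ _ _ => anc_trans⟩
  haveI : IsIrrefl (Fin d) (fun m i => anc E m i) := ⟨fun i => not_anc_self hE i⟩
  exact Finite.wellFounded_of_trans_of_irrefl _

lemma sup_mul_right (s : Finset (Fin d)) (f : Fin d → ℝ≥0) (a : ℝ≥0) :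
    (s.sup f) * a = s.sup fun x => f x * a := by
  refine (Finset.comp_sup_eq_sup_comp (· * a) (fun x y => ?_) (by simp)).trans rfl
  rcases le_total x y with h | h
  · rw [sup_eq_right.2 h, sup_eq_right.2 (mul_le_mul_left h a)]
  · rw [sup_eq_left.2 h, sup_eq_left.2 (mul_le_mul_left h a)]

lemma mul_sup_left (s : Finset (Fin d)) (f : Fin d → ℝ≥0) (a : ℝ≥0) :
    a * s.sup f = s.sup fun x => a * f x := by
  rw [mul_comm, sup_mul_right]
  simp [mul_comm]

lemma sup_delta (b : Fin d → ℝ≥0) (j : Fin d) :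
    (Finset.univ.sup fun m => b m * if m = j then (1:ℝ≥0) else 0) = b j := by
  apply le_antisymm
  · exact Finset.sup_le fun m _ => by split <;> simp_all
  · simpa using Finset.le_sup (f := fun m => b m * if m = j then (1:ℝ≥0) else 0)
      (Finset.mem_univ j)

lemma max_mul_right (x y a : ℝ≥0) : (x ⊔ y) * a = x * a ⊔ y * a := by
  rcases le_total x y with h | h
  · rw [sup_eq_right.2 h, sup_eq_right.2 (mul_le_mul_left h a)]
  · rw [sup_eq_left.2 h, sup_eq_left.2 (mul_le_mul_left h a)]

lemma fp_iff (E : Fin d → Fin d → Prop) (c' b : Fin d → Fin d → ℝ≥0) :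
    (∀ z : Fin d → ℝ≥0,
        IsRecML E c' z fun i => Finset.univ.sup fun j => b j i * z j) ↔
    ∀ j i, b j i = (Finset.univ.sup fun k => if E k i then c' k i * b j k else 0) ⊔
      (if j = i then c' i i else 0) := by
  constructor
  · intro h j i
    have hz := h (fun m => if m = j then (1:ℝ≥0) else 0) i
    simp only [sup_delta] at hz
    rw [hz]
    congr 1
    rcases eq_or_ne j i with rfl | hne
    · simp
    · simp [hne, Ne.symm hne]
  · intro h z i
    apply le_antisymm
    · apply Finset.sup_le
      intro j _
      rw [h j i, max_mul_right, sup_mul_right]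
      apply sup_le_sup
      · apply Finset.sup_le
        intro k _
        refine le_trans ?_ (Finset.le_sup (Finset.mem_univ k))
        split
        · rw [mul_assoc]
          exact mul_le_mul_right
            (Finset.le_sup (f := fun m => b m k * z m) (Finset.mem_univ j)) _
        · simp
      · split
        · next hji => subst hji; simp
        · simp
    · apply sup_le
      · apply Finset.sup_le
        intro k _
        split
        · next hki =>
          rw [mul_sup_left]
          apply Finset.sup_le
          intro j _
          refine le_trans ?_ (Finset.le_sup (Finset.mem_univ j))
          rw [← mul_assoc]
          refine mul_le_mul_left ?_ _
          have hk : c' k i * b j k ≤ Finset.univ.sup fun k' =>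
              if E k' i then c' k' i * b j k' else 0 :=
            le_trans (le_of_eq (if_pos hki).symm)
              (Finset.le_sup (f := fun k' => if E k' i then c' k' i * b j k' else 0)
                (Finset.mem_univ k))
          rw [h j i]
          exact hk.trans le_sup_left
        · simp
      · refine le_trans (mul_le_mul_left ?_ (z i))
          (Finset.le_sup (f := fun j => b j i * z j) (Finset.mem_univ i))
        rw [h i i]
        simp

lemma key {E : Fin d → Fin d → Prop} (hE : Acyclic E) {c' b : Fin d → Fin d → ℝ≥0}
    (hfp : ∀ j i, b j i = (Finset.univ.sup fun k => if E k i then c' k i * b j k else 0) ⊔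
      (if j = i then c' i i else 0)) :
    ∀ i j k, b j k * b k i ≤ b j i * b k k := by
  intro i
  refine (wf_anc hE).induction (C := fun i => ∀ j k, b j k * b k i ≤ b j i * b k k) i ?_
  intro i IH j k
  rcases eq_or_ne k i with rfl | hki
  · rw [mul_comm]
  · have hbk : b k i = Finset.univ.sup fun m => if E m i then c' m i * b k m else 0 := by
      rw [hfp k i, if_neg hki]
      exact max_eq_left (zero_le)
    rw [hbk, mul_sup_left]
    apply Finset.sup_le
    intro m _
    split
    · next hmi =>
      have h1 : b j k * b k m ≤ b j m * b k k := IH m (anc_of_edge hmi) j k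
      have h2 : c' m i * b j m ≤ b j i := by
        rw [hfp j i]
        exact le_trans (le_trans (le_of_eq (if_pos hmi).symm)
          (Finset.le_sup (f := fun k' => if E k' i then c' k' i * b j k' else 0)
            (Finset.mem_univ m))) le_sup_left
      calc b j k * (c' m i * b k m) = c' m i * (b j k * b k m) := by ring
        _ ≤ c' m i * (b j m * b k k) := mul_le_mul_right h1 _
        _ = (c' m i * b j m) * b k k := by ring
        _ ≤ b j i * b k k := mul_le_mul_left h2 _
    · simp

/-- Let `𝒟` be a DAG with reachability matrix `sgn(B)`. Then `B` is the ML
coefficient matrix of a recursive ML model on `𝒟` (there are positive weights `c'` such that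
`max_j b j i * z j` solves the recursive equations on `𝒟`) iff for every `i ∈ V`:
`b j i = max_{k ∈ de(j) ∩ pa(i)} b j k * b k i / b k k` for all `j ∈ an(i) ∖ pa(i)`, and
`b j i ≥ max_{k ∈ de(j) ∩ pa(i)} b j k * b k i / b k k` for all `j ∈ pa(i)`
(empty max being `0`). -/
theorem stmt8 {d : ℕ} (hd : 1 ≤ d) (E : Fin d → Fin d → Prop) (hE : Acyclic E)
    (b : Fin d → Fin d → ℝ≥0)
    (hsgn : ∀ j i, 0 < b j i ↔ (anc E j i ∨ j = i)) :
    (∃ c' : Fin d → Fin d → ℝ≥0, (∀ k i, E k i → 0 < c' k i) ∧ (∀ i, 0 < c' i i) ∧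
        ∀ z : Fin d → ℝ≥0,
          IsRecML E c' z fun i => Finset.univ.sup fun j => b j i * z j) ↔
    ∀ i : Fin d,
      (∀ j, anc E j i → ¬ E j i →
        b j i = Finset.univ.sup fun k =>
          if anc E j k ∧ E k i then b j k * b k i / b k k else 0) ∧
      (∀ j, E j i →
        (Finset.univ.sup fun k =>
          if anc E j k ∧ E k i then b j k * b k i / b k k else 0) ≤ b j i) := by
  have hbpos : ∀ k, (0:ℝ≥0) < b k k := fun k => (hsgn k k).2 (Or.inr rfl)
  constructor
  · rintro ⟨c', hcE, hcD, hrec⟩ i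
    have hfp := (fp_iff E c' b).1 hrec
    have hS := key hE hfp
    have hub : ∀ j, (Finset.univ.sup fun k =>
        if anc E j k ∧ E k i then b j k * b k i / b k k else 0) ≤ b j i := by
      intro j
      apply Finset.sup_le
      intro k _
      split
      · rw [div_le_iff₀ (hbpos k)]
        exact hS i j k
      · exact zero_le
    refine ⟨fun j hji hnE => ?_, fun j _ => hub j⟩
    have hjne : j ≠ i := fun h => not_anc_self hE i (h ▸ hji)
    refine le_antisymm ?_ (hub j)
    rw [hfp j i, if_neg hjne]
    refine sup_le (Finset.sup_le fun k _ => ?_) (zero_le)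
    split
    · next hki =>
      rcases eq_or_ne (b j k) 0 with hb0 | hb0
      · rw [hb0, mul_zero]; exact zero_le
      · have hjk : anc E j k := by
          rcases (hsgn j k).1 (pos_iff_ne_zero.2 hb0) with h | rfl
          · exact h
          · exact absurd hki hnE
        have hc'le : c' k i ≤ b k i / b k k := by
          rw [le_div_iff₀ (hbpos k)]
          rw [hfp k i]
          exact le_trans (le_trans (le_of_eq (if_pos hki).symm)
            (Finset.le_sup (f := fun k' => if E k' i then c' k' i * b k k' else 0)
              (Finset.mem_univ k))) le_sup_left
        calc c' k i * b j k ≤ (b k i / b k k) * b j k := mul_le_mul_left hc'le _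
          _ = b j k * b k i / b k k := by
              rw [div_mul_eq_mul_div, mul_comm (b k i) (b j k)]
          _ ≤ _ := le_trans (le_of_eq (if_pos ⟨hjk, hki⟩).symm)
              (Finset.le_sup (f := fun k' =>
                if anc E j k' ∧ E k' i then b j k' * b k' i / b k' k' else 0)
                (Finset.mem_univ k))
    · exact zero_le
  · intro H
    refine ⟨fun k i => if k = i then b k k else b k i / b k k, ?_, ?_, ?_⟩
    · intro k i hki
      beta_reduce
      rw [if_neg (edge_ne hE hki), pos_iff_ne_zero]
      exact div_ne_zero (ne_of_gt ((hsgn k i).2 (Or.inl (anc_of_edge hki))))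
        (ne_of_gt (hbpos k))
    · intro i; simpa using hbpos i
    · rw [fp_iff]
      intro j i
      have hterm : ∀ k, E k i →
          (if k = i then b k k else b k i / b k k) = b k i / b k k := fun k hki =>
        if_neg (edge_ne hE hki)
      rcases eq_or_ne j i with rfl | hjne
      · rw [if_pos rfl, if_pos rfl]
        refine le_antisymm le_sup_right (sup_le (Finset.sup_le fun k _ => ?_) le_rfl)
        split
        · next hki =>
          have hb0 : b j k = 0 := by
            by_contra h
            rcases (hsgn j k).1 (pos_iff_ne_zero.2 h) with h' | rfl
            · exact not_anc_self hE j (anc_trans h' (anc_of_edge hki))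
            · exact not_anc_self hE j (anc_of_edge hki)
          rw [hb0, mul_zero]; exact zero_le
        · exact zero_le
      · rw [if_neg hjne]
        by_cases hji : anc E j i
        · by_cases hEji : E j i
          · -- j is a parent of i
            refine le_antisymm ?_ (sup_le (Finset.sup_le fun k _ => ?_) (zero_le))
            · refine le_trans ?_ (le_trans (Finset.le_sup (f := fun k =>
                  if E k i then (if k = i then b k k else b k i / b k k) * b j k else 0)
                  (Finset.mem_univ j)) le_sup_left)
              beta_reduce
              rw [if_pos hEji, hterm j hEji, div_mul_cancel₀ _ (ne_of_gt (hbpos j))]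
            · split
              · next hki =>
                rw [hterm k hki]
                rcases eq_or_ne (b j k) 0 with hb0 | hb0
                · rw [hb0, mul_zero]; exact zero_le
                · rcases eq_or_ne k j with rfl | hkj
                  · rw [div_mul_cancel₀ _ (ne_of_gt (hbpos k))]
                  · have hjk : anc E j k := by
                      rcases (hsgn j k).1 (pos_iff_ne_zero.2 hb0) with h' | rfl
                      · exact h'
                      · exact absurd rfl hkj
                    refine le_trans (le_of_eq ?_) (le_trans (le_trans
                      (le_of_eq (if_pos ⟨hjk, hki⟩).symm)
                      (Finset.le_sup (f := fun k' =>
                        if anc E j k' ∧ E k' i then b j k' * b k' i / b k' k' else 0)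
                        (Finset.mem_univ k))) ((H i).2 j hEji))
                    rw [div_mul_eq_mul_div, mul_comm (b k i) (b j k)]
              · exact zero_le
          · -- j ∈ an(i) \ pa(i)
            rw [(H i).1 j hji hEji]
            refine le_antisymm (Finset.sup_le fun k _ => ?_)
              (sup_le (Finset.sup_le fun k _ => ?_) (zero_le))
            · split
              · next h =>
                obtain ⟨hjk, hki⟩ := h
                refine le_trans (le_of_eq ?_) (le_trans (Finset.le_sup (f := fun k' =>
                    if E k' i then (if k' = i then b k' k' else b k' i / b k' k') * b j k'
                    else 0) (Finset.mem_univ k)) le_sup_left)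
                beta_reduce
                rw [if_pos hki, hterm k hki, div_mul_eq_mul_div, mul_comm (b k i) (b j k)]
              · exact zero_le
            · split
              · next hki =>
                rw [hterm k hki]
                rcases eq_or_ne (b j k) 0 with hb0 | hb0
                · rw [hb0, mul_zero]; exact zero_le
                · have hjk : anc E j k := by
                    rcases (hsgn j k).1 (pos_iff_ne_zero.2 hb0) with h' | rfl
                    · exact h'
                    · exact absurd hki hEji
                  refine le_trans (le_of_eq ?_) (Finset.le_sup (f := fun k' =>
                    if anc E j k' ∧ E k' i then b j k' * b k' i / b k' k' else 0)
                    (Finset.mem_univ k))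
                  beta_reduce
                  rw [if_pos ⟨hjk, hki⟩, div_mul_eq_mul_div, mul_comm (b k i) (b j k)]
              · exact zero_le
        · -- not an ancestor: b j i = 0
          have hb0 : b j i = 0 := by
            by_contra h
            rcases (hsgn j i).1 (pos_iff_ne_zero.2 h) with h' | h'
            · exact hji h'
            · exact hjne h'
          rw [hb0]
          refine le_antisymm (zero_le) (sup_le (Finset.sup_le fun k _ => ?_) le_rfl)
          split
          · next hki =>
            have hbjk : b j k = 0 := by
              by_contra h
              rcases (hsgn j k).1 (pos_iff_ne_zero.2 h) with h' | rfl
              · exact hji (anc_trans h' (anc_of_edge hki))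
              · exact hji (anc_of_edge hki)
            rw [hbjk, mul_zero]
          · exact le_rfl

end MaxLinearDAG
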